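/- Let $X \sim \mathrm{Poisson}(\lambda)$. For all $t \ge 0$, $\Pr(|X - \lambda| \ge t) \le 2 \exp\left( \frac{-t^2}{2(\lambda + t/3)} \right)$. -/

import Mathlib

open MeasureTheory ProbabilityTheory
open scoped NNReal ENNReal

section PoissonBernsteinAux

open Real

/-- If `f 0 = 0` and `f' ≥ 0` on `[0,∞)` then `f ≥ 0` on `[0,∞)`. -/
private lemma aux_nonneg_of_deriv (f f' : ℝ → ℝ) (hd : ∀ x, HasDerivAt f (f' x) x)
    (h0 : f 0 = 0) (hf' : ∀ x, 0 ≤ x → 0 ≤ f' x) : ∀ x, 0 ≤ x → 0 ≤ f x := by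
  intro x hx
  have hmono : MonotoneOn f (Set.Ici (0:ℝ)) := by
    apply monotoneOn_of_deriv_nonneg (convex_Ici 0)
    · exact fun y _ => (hd y).continuousAt.continuousWithinAt
    · intro y hy
      exact ((hd y).differentiableAt).differentiableWithinAt
    · intro y hy
      rw [(hd y).deriv]
      exact hf' y (le_of_lt (by simpa using hy))
  calc (0:ℝ) = f 0 := h0.symm
    _ ≤ f x := hmono (by simp) (by simpa using hx) hx

private lemma aux_exp_neg_le (x : ℝ) (hx : 0 ≤ x) : exp (-x) ≤ 1 - x + x^2/2 := by
  have key := aux_nonneg_of_deriv (fun x => (1 - x + x^2/2) * exp x - 1)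
      (fun x => x^2/2 * exp x) ?_ (by norm_num) ?_ x hx
  · have hpos : 0 < exp x := exp_pos x
    have h1 : 1 ≤ (1 - x + x^2/2) * exp x := by linarith
    rw [exp_neg, inv_le_iff_one_le_mul₀ hpos]
    linarith
  · intro y
    have h1 : HasDerivAt (fun x : ℝ => 1 - x + x^2/2) (-1 + y) y := by
      have := ((hasDerivAt_id y).const_sub 1).add (((hasDerivAt_id y).pow 2).div_const 2)
      refine this.congr_deriv ?_
      simp only [id_eq]; ring
    have := (h1.mul (hasDerivAt_exp y)).sub_const 1
    refine this.congr_deriv ?_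
    ring
  · intro y hy
    positivity

private lemma aux_exp_sub_bound (x : ℝ) (hx : 0 ≤ x) : (exp x - 1 - x) * (1 - x/3) ≤ x^2/2 := by
  have hh' : ∀ y : ℝ, 0 ≤ y → 0 ≤ 1 + (y-1) * exp y := by
    refine aux_nonneg_of_deriv _ (fun y => y * exp y) (fun y => ?_) (by norm_num)
      (fun y hy => by positivity)
    have := (hasDerivAt_const y (1:ℝ)).add
      (((hasDerivAt_id y).sub_const 1).mul (hasDerivAt_exp y))
    refine this.congr_deriv ?_
    simp only [id_eq]; ring
  have hh : ∀ y : ℝ, 0 ≤ y → 0 ≤ (y+2) + (y-2) * exp y := by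
    refine aux_nonneg_of_deriv _ (fun y => 1 + (y-1) * exp y) (fun y => ?_) (by norm_num) hh'
    have := ((hasDerivAt_id y).add_const 2).add
      (((hasDerivAt_id y).sub_const 2).mul (hasDerivAt_exp y))
    refine this.congr_deriv ?_
    simp only [id_eq]; ring
  have hg := aux_nonneg_of_deriv (fun y => y^2/2 - (exp y - 1 - y) * (1 - y/3))
      (fun y => (1/3) * ((y+2) + (y-2) * exp y)) ?_ (by norm_num)
      (fun y hy => by linarith [hh y hy]) x hx
  · linarith
  · intro y
    have h1 : HasDerivAt (fun y : ℝ => exp y - 1 - y) (exp y - 1) y := by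
      have := ((hasDerivAt_exp y).sub_const 1).sub (hasDerivAt_id y)
      exact this
    have h2 : HasDerivAt (fun y : ℝ => 1 - y/3) (-(1/3)) y := by
      have := (hasDerivAt_const y (1:ℝ)).sub ((hasDerivAt_id y).div_const 3)
      rw [show -(1/3:ℝ) = 0 - 1/3 by norm_num]; exact this
    have := (((hasDerivAt_id y).pow 2).div_const 2).sub (h1.mul h2)
    refine this.congr_deriv ?_
    simp only [id_eq]; ring

private lemma aux_poisson_tilt_hasSum (r : ℝ≥0) (θ : ℝ) :
    HasSum (fun k : ℕ => poissonPMFReal r k * exp (θ * k)) (exp ((r : ℝ) * (exp θ - 1))) := by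
  have h0 : HasSum (fun k : ℕ => ((r : ℝ) * exp θ)^k / k.factorial) (exp ((r:ℝ) * exp θ)) := by
    rw [exp_eq_exp_ℝ]
    exact NormedSpace.expSeries_div_hasSum_exp _
  have h1 := h0.mul_left (exp (-(r:ℝ)))
  have heq : (fun k : ℕ => poissonPMFReal r k * exp (θ * k))
      = fun k : ℕ => exp (-(r:ℝ)) * (((r : ℝ) * exp θ)^k / k.factorial) := by
    funext k
    unfold poissonPMFReal
    rw [mul_pow, ← exp_nat_mul]
    field_simp
  rw [heq, show exp ((r:ℝ)*(exp θ - 1)) = exp (-(r:ℝ)) * exp ((r:ℝ) * exp θ) by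
    rw [← exp_add]; ring_nf]
  exact h1

private lemma aux_poisson_chernoff (r : ℝ≥0) (S : Set ℕ) (g : ℕ → ℝ) (c : ℝ)
    (hg0 : ∀ k, 0 ≤ g k) (hg1 : ∀ k ∈ S, 1 ≤ g k)
    (hsum : HasSum (fun k => poissonPMFReal r k * g k) c) :
    poissonMeasure r S ≤ ENNReal.ofReal c := by
  have hms : MeasurableSet S := MeasurableSet.of_discrete
  have hPM : poissonMeasure r S = (poissonPMF r).toMeasure S := by
    rw [poissonMeasure, Measure.sum_apply _ hms, PMF.toMeasure_apply _ hms]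
    congr 1; ext i
    by_cases hi : i ∈ S <;> simp [hi, ← poissonPMFReal_ofReal_eq_poissonPMF, poissonPMFReal]
  rw [hPM, PMF.toMeasure_apply (poissonPMF r) hms]
  have hle : ∀ k : ℕ, S.indicator (⇑(poissonPMF r)) k
      ≤ ENNReal.ofReal (poissonPMFReal r k * g k) := by
    intro k
    by_cases hk : k ∈ S
    · rw [Set.indicator_of_mem hk]
      show ENNReal.ofReal (poissonPMFReal r k) ≤ _
      apply ENNReal.ofReal_le_ofReal
      nlinarith [hg1 k hk, poissonPMFReal_nonneg (r := r) (n := k)]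
    · rw [Set.indicator_of_notMem hk]
      exact zero_le
  calc ∑' k, S.indicator (⇑(poissonPMF r)) k
      ≤ ∑' k, ENNReal.ofReal (poissonPMFReal r k * g k) := ENNReal.tsum_le_tsum hle
    _ = ENNReal.ofReal c := by
        rw [← hsum.tsum_eq, ENNReal.ofReal_tsum_of_nonneg
          (fun k => mul_nonneg poissonPMFReal_nonneg (hg0 k)) hsum.summable]

private lemma aux_poisson_chernoff_upper (r : ℝ≥0) (a s : ℝ) (hs : 0 ≤ s) :
    poissonMeasure r {k : ℕ | a ≤ k} ≤ ENNReal.ofReal (exp ((r:ℝ)*(exp s - 1) - s*a)) := by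
  apply aux_poisson_chernoff r _ (fun k : ℕ => exp (s * ((k:ℝ) - a)))
  · intro k; positivity
  · intro k hk
    apply one_le_exp
    have : a ≤ (k:ℝ) := hk
    nlinarith
  · have h := (aux_poisson_tilt_hasSum r s).mul_right (exp (-(s*a)))
    have heq : (fun k : ℕ => poissonPMFReal r k * exp (s * k) * exp (-(s*a)))
        = fun k : ℕ => poissonPMFReal r k * exp (s * ((k:ℝ) - a)) := by
      funext k; rw [mul_assoc, ← exp_add]; ring_nf
    rw [heq] at h
    rw [← exp_add] at h
    rw [show (r:ℝ)*(exp s - 1) - s*a = (r:ℝ)*(exp s - 1) + -(s*a) by ring]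
    exact h

private lemma aux_poisson_chernoff_lower (r : ℝ≥0) (a s : ℝ) (hs : 0 ≤ s) :
    poissonMeasure r {k : ℕ | (k:ℝ) ≤ a} ≤ ENNReal.ofReal (exp ((r:ℝ)*(exp (-s) - 1) + s*a)) := by
  apply aux_poisson_chernoff r _ (fun k : ℕ => exp (s * (a - (k:ℝ))))
  · intro k; positivity
  · intro k hk
    apply one_le_exp
    have : (k:ℝ) ≤ a := hk
    nlinarith
  · have h := (aux_poisson_tilt_hasSum r (-s)).mul_right (exp (s*a))
    have heq : (fun k : ℕ => poissonPMFReal r k * exp (-s * k) * exp (s*a))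
        = fun k : ℕ => poissonPMFReal r k * exp (s * (a - (k:ℝ))) := by
      funext k; rw [mul_assoc, ← exp_add]; ring_nf
    rw [heq] at h
    rw [← exp_add] at h
    exact h

private lemma aux_alg1 (r t X : ℝ) (hr : 0 < r) (ht : 0 < t)
    (hb : (X - 1 - 3*t/(3*r+t)) * (1 - (3*t/(3*r+t))/3) ≤ (3*t/(3*r+t))^2/2) :
    r*(X - 1) - (3*t/(3*r+t))*(r+t) ≤ -t^2/(2*(r+t/3)) := by
  have hu : (0:ℝ) < 3*r+t := by linarith
  have hb' : (X*(3*r+t) - (3*r+t) - 3*t) * (3*r) ≤ 9*t^2/2 := by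
    have h := mul_le_mul_of_nonneg_left hb (le_of_lt (mul_pos hu hu))
    calc (X*(3*r+t) - (3*r+t) - 3*t) * (3*r)
        = (3*r+t) * (3*r+t) * ((X - 1 - 3*t/(3*r+t)) * (1 - (3*t/(3*r+t))/3)) := by
          field_simp
          ring
      _ ≤ (3*r+t) * (3*r+t) * ((3*t/(3*r+t))^2/2) := h
      _ = 9*t^2/2 := by field_simp; ring
  rw [← sub_nonneg]
  have e1 : -t^2/(2*(r+t/3)) - (r*(X - 1) - (3*t/(3*r+t))*(r+t))
      = (9*t^2/2 - (X*(3*r+t) - (3*r+t) - 3*t) * (3*r)) / (3*(3*r+t)) := by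
    field_simp
    ring
  rw [e1]
  apply div_nonneg (by linarith) (by positivity)

private lemma aux_alg2 (r t Y : ℝ) (hr : 0 < r) (ht : 0 < t)
    (hb : Y ≤ 1 - t/r + (t/r)^2/2) :
    r*(Y - 1) + (t/r)*(r - t) ≤ -t^2/(2*(r+t/3)) := by
  have h1 : r*(Y - 1) + (t/r)*(r - t) ≤ -t^2/(2*r) := by
    have e1 : r*((1 - t/r + (t/r)^2/2) - 1) + (t/r)*(r - t) = -t^2/(2*r) := by
      field_simp
      ring
    nlinarith [hb]
  refine h1.trans ?_
  rw [div_le_div_iff₀ (by positivity) (by positivity)]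
  nlinarith

end PoissonBernsteinAux

/-- Bernstein-type two-sided tail bound for a Poisson random variable:
`P(|X - λ| ≥ t) ≤ 2 exp(-t² / (2(λ + t/3)))` for all `t ≥ 0`. -/
theorem poisson_bernstein_tail (r : ℝ≥0) (t : ℝ) (ht : 0 ≤ t) :
    poissonMeasure r {k : ℕ | t ≤ |(k : ℝ) - r|} ≤
      ENNReal.ofReal (2 * Real.exp (-t ^ 2 / (2 * ((r : ℝ) + t / 3)))) := by
  rcases ht.eq_or_lt with h0 | hpos
  · -- t = 0 : RHS = 2, measure ≤ 1
    subst h0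
    calc poissonMeasure r {k : ℕ | (0:ℝ) ≤ |(k : ℝ) - r|}
        ≤ 1 := prob_le_one
      _ ≤ _ := by
          rw [show -(0:ℝ)^2 / (2*((r:ℝ) + 0/3)) = 0 by norm_num, Real.exp_zero]
          norm_num
  rcases eq_or_lt_of_le (zero_le (a := r)) with hr0 | hr
  · -- r = 0
    have hr0' : (r:ℝ) = 0 := by exact_mod_cast hr0.symm
    have hsub : {k : ℕ | t ≤ |(k : ℝ) - r|} ⊆ {k : ℕ | t ≤ (k:ℝ)} := by
      intro k hk
      simp only [Set.mem_setOf_eq, hr0'] at hk ⊢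
      rwa [sub_zero, abs_of_nonneg (by positivity)] at hk
    calc poissonMeasure r {k : ℕ | t ≤ |(k : ℝ) - r|}
        ≤ poissonMeasure r {k : ℕ | t ≤ (k:ℝ)} := measure_mono hsub
      _ ≤ ENNReal.ofReal (Real.exp ((r:ℝ)*(Real.exp (3/2) - 1) - (3/2)*t)) :=
          aux_poisson_chernoff_upper r t (3/2) (by norm_num)
      _ ≤ _ := by
          apply ENNReal.ofReal_le_ofReal
          rw [hr0']
          have he : -t ^ 2 / (2 * ((0:ℝ) + t / 3)) = -(3/2)*t := by
            field_simp
            ring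
          rw [he]
          have := Real.exp_pos (-(3/2)*t)
          rw [show (0:ℝ)*(Real.exp (3/2) - 1) - (3/2)*t = -(3/2)*t by ring]
          linarith
  -- main case r > 0, t > 0
  have hrR : (0:ℝ) < r := hr
  have hu : (0:ℝ) < 3*(r:ℝ) + t := by linarith
  have hsub : {k : ℕ | t ≤ |(k : ℝ) - r|}
      ⊆ {k : ℕ | (r:ℝ) + t ≤ k} ∪ {k : ℕ | (k:ℝ) ≤ (r:ℝ) - t} := by
    intro k hk
    have hk' : t ≤ |(k:ℝ) - r| := hk
    rcases le_abs.mp hk' with h | h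
    · left; show (r:ℝ) + t ≤ (k:ℝ); linarith
    · right; show (k:ℝ) ≤ (r:ℝ) - t; linarith
  have hs₁0 : (0:ℝ) ≤ 3*t/(3*(r:ℝ)+t) := by positivity
  have hup : poissonMeasure r {k : ℕ | (r:ℝ) + t ≤ k}
      ≤ ENNReal.ofReal (Real.exp (-t ^ 2 / (2 * ((r : ℝ) + t / 3)))) := by
    refine le_trans (aux_poisson_chernoff_upper r ((r:ℝ)+t) (3*t/(3*(r:ℝ)+t)) hs₁0) ?_
    apply ENNReal.ofReal_le_ofReal
    apply Real.exp_le_exp.mpr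
    exact aux_alg1 (r:ℝ) t (Real.exp (3*t/(3*(r:ℝ)+t))) hrR hpos
      (aux_exp_sub_bound _ hs₁0)
  have hs₂0 : (0:ℝ) ≤ t/(r:ℝ) := by positivity
  have hlow : poissonMeasure r {k : ℕ | (k:ℝ) ≤ (r:ℝ) - t}
      ≤ ENNReal.ofReal (Real.exp (-t ^ 2 / (2 * ((r : ℝ) + t / 3)))) := by
    refine le_trans (aux_poisson_chernoff_lower r ((r:ℝ)-t) (t/(r:ℝ)) hs₂0) ?_
    apply ENNReal.ofReal_le_ofReal
    apply Real.exp_le_exp.mpr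
    exact aux_alg2 (r:ℝ) t (Real.exp (-(t/(r:ℝ)))) hrR hpos (aux_exp_neg_le _ hs₂0)
  calc poissonMeasure r {k : ℕ | t ≤ |(k : ℝ) - r|}
      ≤ poissonMeasure r ({k : ℕ | (r:ℝ) + t ≤ k} ∪ {k : ℕ | (k:ℝ) ≤ (r:ℝ) - t}) :=
        measure_mono hsub
    _ ≤ poissonMeasure r {k : ℕ | (r:ℝ) + t ≤ k}
        + poissonMeasure r {k : ℕ | (k:ℝ) ≤ (r:ℝ) - t} := measure_union_le _ _
    _ ≤ ENNReal.ofReal (Real.exp (-t ^ 2 / (2 * ((r : ℝ) + t / 3))))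
        + ENNReal.ofReal (Real.exp (-t ^ 2 / (2 * ((r : ℝ) + t / 3)))) := add_le_add hup hlow
    _ = ENNReal.ofReal (2 * Real.exp (-t ^ 2 / (2 * ((r : ℝ) + t / 3)))) := by
        rw [← ENNReal.ofReal_add (Real.exp_pos _).le (Real.exp_pos _).le]
        ring_nf
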